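/- arXiv:1312.5119 — 2 statements merged into one kernel-verified Lean document; each statement's English description precedes it below -/
import Mathlib

section
/- Let k be a positive integer, let Π be a partition of {1,…,2k} all of whose blocks have cardinality at least 2, and let Π_0, Π_1 be perfect matchings of {1,…,2k}. Suppose #(Π ∨ Π_0 ∨ Π_1) = 1 and #(Π_0 ∨ Π_1) = r for some positive integer r ≤ k. Then #(Π_0 ∨ Π) + #(Π_1 ∨ Π) ≤ (#Π + 1)·1[r = 1] + min{#Π + 1, k + 1 − r/2}·1[r ≥ 2]. -/
open Finset

noncomputable section

attribute [local instance] Classical.propDecidable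

/-- `P` is a set partition of the (finite) index type `ι`: its blocks are nonempty and
every index lies in exactly one block. -/
def IsSetPartition {ι : Type*} [Fintype ι] (P : Finset (Finset ι)) : Prop :=
  (∀ A ∈ P, A.Nonempty) ∧ ∀ i : ι, ∃! A : Finset ι, A ∈ P ∧ i ∈ A

/-- A perfect matching: a set partition all of whose blocks have two elements. -/
def IsPerfectMatching {ι : Type*} [Fintype ι] (P : Finset (Finset ι)) : Prop :=
  IsSetPartition P ∧ ∀ A ∈ P, A.card = 2

/-- The relation generating the join `P ∨ Q` of two set partitions: the equivalence closure
of "lying in a common block of `P` or of `Q`". -/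
def joinRel {ι : Type*} (P Q : Finset (Finset ι)) : ι → ι → Prop :=
  Relation.EqvGen fun a b => (∃ A ∈ P, a ∈ A ∧ b ∈ A) ∨ (∃ A ∈ Q, a ∈ A ∧ b ∈ A)

/-- `B` is a block of the join `P ∨ Q`, i.e. an equivalence class of `joinRel P Q`. -/
def IsJoinBlock {ι : Type*} [Fintype ι] (P Q : Finset (Finset ι)) (B : Finset ι) : Prop :=
  ∃ a : ι, B = Finset.univ.filter (fun b => joinRel P Q a b)

/-- The set of blocks of the join `P ∨ Q`. -/
def joinBlocks {ι : Type*} [Fintype ι] (P Q : Finset (Finset ι)) : Finset (Finset ι) :=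
  Finset.univ.filter (fun B : Finset ι => IsJoinBlock P Q B)

/-- `#(P ∨ Q)`, the number of blocks of the join of two set partitions. -/
def joinCard {ι : Type*} [Fintype ι] (P Q : Finset (Finset ι)) : ℕ :=
  (joinBlocks P Q).card

/-! ### Infrastructure -/

namespace AZAux
set_option linter.unusedSectionVars false

open Module Submodule

abbrev F2 := ZMod 2

variable {ι : Type*} [Fintype ι]

/-- The relation of lying in a common block. -/
def blockRel (P : Finset (Finset ι)) : ι → ι → Prop := fun a b => ∃ A ∈ P, a ∈ A ∧ b ∈ A

lemma joinRel_eq (P Q : Finset (Finset ι)) :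
    joinRel P Q = Relation.EqvGen (fun a b => blockRel P a b ∨ blockRel Q a b) := rfl

/-- Submodule of functions invariant under a relation. -/
def inv (r : ι → ι → Prop) : Submodule F2 (ι → F2) where
  carrier := {f | ∀ ⦃a b⦄, r a b → f a = f b}
  add_mem' := by intro f g hf hg a b h; simp only [Pi.add_apply, hf h, hg h]
  zero_mem' := by intro a b _; rfl
  smul_mem' := by intro c f hf a b h; simp only [Pi.smul_apply, hf h]

lemma mem_inv {r : ι → ι → Prop} {f : ι → F2} : f ∈ inv r ↔ ∀ ⦃a b⦄, r a b → f a = f b :=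
  Iff.rfl

lemma inv_eqvGen (r : ι → ι → Prop) : inv (Relation.EqvGen r) = inv r := by
  apply le_antisymm
  · intro f hf a b h
    exact hf (Relation.EqvGen.rel a b h)
  · intro f hf a b h
    induction h with
    | rel x y h => exact hf h
    | refl x => rfl
    | symm x y _ ih => exact ih.symm
    | trans x y z _ _ ih₁ ih₂ => exact ih₁.trans ih₂

lemma inv_sup (r s : ι → ι → Prop) :
    inv (fun a b => r a b ∨ s a b) = inv r ⊓ inv s := by
  apply le_antisymm
  · exact le_inf (fun f hf a b h => hf (Or.inl h)) (fun f hf a b h => hf (Or.inr h))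
  · rintro f ⟨hf₁, hf₂⟩ a b (h | h)
    · exact hf₁ h
    · exact hf₂ h

lemma inv_congr {r s : ι → ι → Prop} (h : ∀ a b, r a b ↔ s a b) : inv r = inv s := by
  have : r = s := by funext a b; exact propext (h a b)
  rw [this]

lemma inv_joinRel (P Q : Finset (Finset ι)) :
    inv (joinRel P Q) = inv (blockRel P) ⊓ inv (blockRel Q) := by
  rw [joinRel_eq, inv_eqvGen, inv_sup]

/-- The join as a setoid. -/
def joinSetoid (P Q : Finset (Finset ι)) : Setoid ι :=
  ⟨joinRel P Q, Relation.EqvGen.is_equivalence _⟩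

lemma joinSetoid_r (P Q : Finset (Finset ι)) {a b : ι} :
    (joinSetoid P Q) a b ↔ joinRel P Q a b := Iff.rfl

/-- Invariant functions for a setoid: dimension equals number of classes. -/
def invEquiv (s : Setoid ι) : (inv (s : ι → ι → Prop)) ≃ₗ[F2] (Quotient s → F2) where
  toFun f := Quotient.lift (f : ι → F2) (fun a b h => f.2 h)
  map_add' f g := by
    funext q
    induction q using Quotient.inductionOn
    rfl
  map_smul' c f := by
    funext q
    induction q using Quotient.inductionOn
    rfl
  invFun g := ⟨fun a => g ⟦a⟧, by intro a b h; simp only; rw [Quotient.sound h]⟩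
  left_inv f := by ext a; rfl
  right_inv g := by funext q; induction q using Quotient.inductionOn; rfl

lemma finrank_inv (s : Setoid ι) :
    finrank F2 (inv (s : ι → ι → Prop)) = Fintype.card (Quotient s) := by
  rw [(invEquiv s).finrank_eq, Module.finrank_pi]

lemma joinCard_eq_card_quotient (P Q : Finset (Finset ι)) :
    joinCard P Q = Fintype.card (Quotient (joinSetoid P Q)) := by
  classical
  have hmap : joinBlocks P Q =
      Finset.univ.image (fun q : Quotient (joinSetoid P Q) =>
        Finset.univ.filter (fun b => joinRel P Q q.out b)) := by
    ext B
    simp only [joinBlocks, Finset.mem_filter, Finset.mem_univ, true_and, Finset.mem_image]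
    simp only [IsJoinBlock]
    constructor
    · rintro ⟨a, rfl⟩
      refine ⟨⟦a⟧, ?_⟩
      have h : joinRel P Q (Quotient.mk (joinSetoid P Q) a).out a :=
        (joinSetoid_r P Q).mp (Quotient.mk_out (s := joinSetoid P Q) a)
      ext b
      simp only [Finset.mem_filter, Finset.mem_univ, true_and]
      exact ⟨fun hb => (Relation.EqvGen.is_equivalence _).trans
        ((Relation.EqvGen.is_equivalence _).symm h) hb,
        fun hb => (Relation.EqvGen.is_equivalence _).trans h hb⟩
    · rintro ⟨q, -, rfl⟩
      exact ⟨q.out, rfl⟩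
  rw [joinCard, hmap, Finset.card_image_of_injective _ ?_, Finset.card_univ]
  intro q q' h
  dsimp only at h
  have hq : q.out ∈ Finset.univ.filter (fun b => joinRel P Q q.out b) := by
    simp only [Finset.mem_filter, Finset.mem_univ, true_and]
    exact (Relation.EqvGen.is_equivalence _).refl _
  rw [h] at hq
  simp only [Finset.mem_filter, Finset.mem_univ, true_and] at hq
  exact (Quotient.out_equiv_out.mp (show (joinSetoid P Q) q'.out q.out from hq)).symm

lemma blockRel_joinBlocks (P Q : Finset (Finset ι)) (a b : ι) :
    blockRel (joinBlocks P Q) a b ↔ joinRel P Q a b := by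
  constructor
  · rintro ⟨B, hB, haB, hbB⟩
    simp only [joinBlocks, Finset.mem_filter, Finset.mem_univ, true_and] at hB
    simp only [IsJoinBlock] at hB
    obtain ⟨x, rfl⟩ := hB
    simp only [Finset.mem_filter, Finset.mem_univ, true_and] at haB hbB
    exact (Relation.EqvGen.is_equivalence _).trans
      ((Relation.EqvGen.is_equivalence _).symm haB) hbB
  · intro h
    refine ⟨Finset.univ.filter (fun y => joinRel P Q a y), ?_, ?_, ?_⟩
    · simp only [joinBlocks, Finset.mem_filter, Finset.mem_univ, true_and]
      simp only [IsJoinBlock]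
      exact ⟨a, rfl⟩
    · simp only [Finset.mem_filter, Finset.mem_univ, true_and]
      exact (Relation.EqvGen.is_equivalence _).refl _
    · simp only [Finset.mem_filter, Finset.mem_univ, true_and]
      exact h

lemma finrank_inv_joinRel (P Q : Finset (Finset ι)) :
    finrank F2 (inv (joinRel P Q)) = joinCard P Q := by
  rw [joinCard_eq_card_quotient, ← finrank_inv (joinSetoid P Q)]
  rfl


/-! ### Partition basics -/

lemma block_eq_block {P : Finset (Finset ι)} (hP : IsSetPartition P) {A B : Finset ι} {x : ι}
    (hA : A ∈ P) (hB : B ∈ P) (hxA : x ∈ A) (hxB : x ∈ B) : A = B := by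
  obtain ⟨C, -, hu⟩ := hP.2 x
  rw [hu A ⟨hA, hxA⟩, hu B ⟨hB, hxB⟩]

/-- Indicator function of a finset, with values in `F2`. -/
def indf (A : Finset ι) : ι → F2 := fun x => if x ∈ A then 1 else 0

lemma indf_mem_inv {P : Finset (Finset ι)} (hP : IsSetPartition P) {A : Finset ι} (hA : A ∈ P) :
    indf A ∈ inv (blockRel P) := by
  rintro x y ⟨B, hB, hxB, hyB⟩
  simp only [indf]
  by_cases hx : x ∈ A
  · have hyA : y ∈ A := by
      rw [block_eq_block hP hA hB hx hxB]; exact hyB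
    rw [if_pos hx, if_pos hyA]
  · have hyA : y ∉ A := by
      intro hy
      exact hx (by rw [block_eq_block hP hA hB hy hyB]; exact hxB)
    rw [if_neg hx, if_neg hyA]

/-- A canonical representative of a (nonempty) finset. -/
def repr' [Nonempty ι] (A : Finset ι) : ι :=
  if h : A.Nonempty then h.choose else Classical.arbitrary ι

lemma repr'_mem [Nonempty ι] {A : Finset ι} (h : A.Nonempty) : repr' A ∈ A := by
  rw [repr', dif_pos h]; exact h.choose_spec

lemma inv_blockRel_eq_span [Nonempty ι] {P : Finset (Finset ι)} (hP : IsSetPartition P) :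
    inv (blockRel P) = Submodule.span F2 (indf '' ↑P) := by
  apply le_antisymm
  · intro f hf
    have hfe : f = ∑ A ∈ P, f (repr' A) • indf A := by
      funext x
      obtain ⟨Ax, ⟨hAx, hxAx⟩, hu⟩ := hP.2 x
      rw [Finset.sum_apply]
      rw [Finset.sum_eq_single Ax]
      · have h1 : indf Ax x = 1 := by simp [indf, hxAx]
        have h2 : f (repr' Ax) = f x := by
          apply hf
          exact ⟨Ax, hAx, repr'_mem ⟨x, hxAx⟩, hxAx⟩
        simp [h1, h2]
      · intro B hB hne
        have : x ∉ B := fun hxB => hne (by rw [hu B ⟨hB, hxB⟩, hu Ax ⟨hAx, hxAx⟩])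
        simp [indf, this]
      · intro h; exact absurd hAx h
    rw [hfe]
    apply Submodule.sum_mem
    intro A hA
    exact Submodule.smul_mem _ _ (Submodule.subset_span ⟨A, hA, rfl⟩)
  · rw [Submodule.span_le]
    rintro g ⟨A, hA, rfl⟩
    exact indf_mem_inv hP hA

lemma finrank_inv_blockRel [Nonempty ι] {P : Finset (Finset ι)} (hP : IsSetPartition P) :
    Module.finrank F2 (inv (blockRel P)) = P.card := by
  classical
  have hind : LinearIndependent F2 (fun A : ↥P => indf (A : Finset ι)) := by
    rw [Fintype.linearIndependent_iff]
    intro c hc A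
    have hA := A.2
    have hx : (repr' (A : Finset ι)) ∈ (A : Finset ι) := repr'_mem (hP.1 _ hA)
    have := congrFun hc (repr' (A : Finset ι))
    rw [Finset.sum_apply] at this
    rw [Finset.sum_eq_single A] at this
    · simpa [indf, hx] using this
    · intro B _ hne
      have hrB : repr' (A : Finset ι) ∉ (B : Finset ι) := by
        intro hmem
        exact hne (Subtype.ext (block_eq_block hP B.2 A.2 hmem hx))
      simp [indf, hrB]
    · intro h; exact absurd (Finset.mem_univ A) h
  have hrange : Set.range (fun A : ↥P => indf (A : Finset ι)) = indf '' ↑P := by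
    ext f
    simp only [Set.mem_range, Set.mem_image]
    constructor
    · rintro ⟨A, rfl⟩; exact ⟨A, A.2, rfl⟩
    · rintro ⟨A, hA, rfl⟩; exact ⟨⟨A, hA⟩, rfl⟩
  rw [inv_blockRel_eq_span hP, ← hrange, finrank_span_eq_card hind]
  simp [Fintype.card_coe]

lemma sum_card_partition {P : Finset (Finset ι)} (hP : IsSetPartition P) :
    ∑ A ∈ P, A.card = Fintype.card ι := by
  classical
  have h1 : ∀ A : Finset ι, A.card = ∑ x : ι, (if x ∈ A then 1 else 0) := by
    intro A
    rw [Finset.sum_ite_mem]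
    simp [Finset.univ_inter]
  calc ∑ A ∈ P, A.card = ∑ A ∈ P, ∑ x : ι, (if x ∈ A then 1 else 0) := by
        exact Finset.sum_congr rfl fun A _ => h1 A
    _ = ∑ x : ι, ∑ A ∈ P, (if x ∈ A then 1 else 0) := Finset.sum_comm
    _ = ∑ _x : ι, 1 := by
        apply Finset.sum_congr rfl
        intro x _
        obtain ⟨Ax, ⟨hAx, hxAx⟩, hu⟩ := hP.2 x
        rw [Finset.sum_eq_single Ax]
        · simp [hxAx]
        · intro B hB hne
          have : x ∉ B := fun hxB => hne (by rw [hu B ⟨hB, hxB⟩, hu Ax ⟨hAx, hxAx⟩])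
          simp [this]
        · intro h; exact absurd hAx h
    _ = Fintype.card ι := by simp

/-! ### Matchings -/

/-- The block of `x` in `M`. -/
def mblock (M : Finset (Finset ι)) (x : ι) : Finset ι :=
  if h : ∃ A, A ∈ M ∧ x ∈ A then h.choose else ∅

lemma mblock_spec {M : Finset (Finset ι)} (hM : IsSetPartition M) (x : ι) :
    mblock M x ∈ M ∧ x ∈ mblock M x := by
  obtain ⟨A, ⟨hA, hxA⟩, -⟩ := hM.2 x
  have h : ∃ A, A ∈ M ∧ x ∈ A := ⟨A, hA, hxA⟩
  rw [mblock, dif_pos h]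
  exact h.choose_spec

lemma mblock_eq {M : Finset (Finset ι)} (hM : IsSetPartition M) {x : ι} {A : Finset ι}
    (hA : A ∈ M) (hxA : x ∈ A) : mblock M x = A :=
  block_eq_block hM (mblock_spec hM x).1 hA (mblock_spec hM x).2 hxA

/-- The partner of `x` in a perfect matching `M`. -/
def partner (M : Finset (Finset ι)) (x : ι) : ι :=
  if h : ((mblock M x).erase x).Nonempty then h.choose else x

lemma partner_spec {M : Finset (Finset ι)} (hM : IsPerfectMatching M) (x : ι) :
    partner M x ∈ mblock M x ∧ partner M x ≠ x := by
  have hcard : (mblock M x).card = 2 := hM.2 _ (mblock_spec hM.1 x).1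
  have hne : ((mblock M x).erase x).Nonempty := by
    rw [← Finset.card_pos, Finset.card_erase_of_mem (mblock_spec hM.1 x).2, hcard]
    norm_num
  rw [partner, dif_pos hne]
  have := hne.choose_spec
  exact ⟨Finset.mem_of_mem_erase this, Finset.ne_of_mem_erase this⟩

lemma mblock_partner {M : Finset (Finset ι)} (hM : IsPerfectMatching M) (x : ι) :
    mblock M (partner M x) = mblock M x :=
  mblock_eq hM.1 (mblock_spec hM.1 x).1 (partner_spec hM x).1

lemma partner_partner {M : Finset (Finset ι)} (hM : IsPerfectMatching M) (x : ι) :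
    partner M (partner M x) = x := by
  have h1 := partner_spec hM (partner M x)
  rw [mblock_partner hM x] at h1
  have hcard : (mblock M x).card = 2 := hM.2 _ (mblock_spec hM.1 x).1
  have hsub : ((mblock M x).erase (partner M x)).card ≤ 1 := by
    rw [Finset.card_erase_of_mem (partner_spec hM x).1, hcard]
  have hx : x ∈ (mblock M x).erase (partner M x) :=
    Finset.mem_erase.mpr ⟨fun h => (partner_spec hM x).2 h.symm, (mblock_spec hM.1 x).2⟩
  have hp : partner M (partner M x) ∈ (mblock M x).erase (partner M x) :=
    Finset.mem_erase.mpr ⟨h1.2, h1.1⟩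
  exact Finset.card_le_one.mp hsub _ hp _ hx

lemma blockRel_partner {M : Finset (Finset ι)} (hM : IsPerfectMatching M) (x : ι) :
    blockRel M x (partner M x) :=
  ⟨mblock M x, (mblock_spec hM.1 x).1, (mblock_spec hM.1 x).2, (partner_spec hM x).1⟩

/-- Sum of a matching-invariant function over a matching-saturated set vanishes (char 2). -/
lemma sum_eq_zero_of_saturated {M : Finset (Finset ι)} (hM : IsPerfectMatching M)
    {C : Finset ι} (hC : ∀ x ∈ C, ∀ y, blockRel M x y → y ∈ C)
    {f : ι → F2} (hf : f ∈ inv (blockRel M)) :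
    ∑ x ∈ C, f x = 0 := by
  apply Finset.sum_involution (fun a _ => partner M a)
  · intro a _
    have : f (partner M a) = f a := (hf (blockRel_partner hM a)).symm
    rw [this, CharTwo.add_self_eq_zero]
  · intro a _ _
    exact (partner_spec hM a).2
  · intro a ha
    exact hC a ha _ (blockRel_partner hM a)
  · intro a _
    exact partner_partner hM a


/-! ### The counting lemma -/

section Counting

variable [DecidableEq ι] {J : Type*} [Fintype J]

lemma card_split (Cs : J → Finset ι) (hCpart : ∀ x : ι, ∃! j : J, x ∈ Cs j) (A : Finset ι) :
    A.card = ∑ j : J, (A ∩ Cs j).card := by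
  classical
  have h1 : ∀ j, (A ∩ Cs j).card = ∑ x ∈ A, (if x ∈ Cs j then 1 else 0) := by
    intro j
    rw [Finset.sum_ite_mem, Finset.sum_const, smul_eq_mul, mul_one]
  calc A.card = ∑ x ∈ A, 1 := by rw [Finset.sum_const, smul_eq_mul, mul_one]
    _ = ∑ x ∈ A, ∑ j : J, (if x ∈ Cs j then 1 else 0) := by
        apply Finset.sum_congr rfl
        intro x _
        obtain ⟨jx, hjx, hu⟩ := hCpart x
        rw [Finset.sum_eq_single jx]
        · simp [hjx]
        · intro j _ hne
          have : x ∉ Cs j := fun hx => hne (hu j hx)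
          simp [this]
        · intro h; exact absurd (Finset.mem_univ jx) h
    _ = ∑ j : J, ∑ x ∈ A, (if x ∈ Cs j then 1 else 0) := Finset.sum_comm
    _ = ∑ j : J, (A ∩ Cs j).card := by
        exact Finset.sum_congr rfl fun j _ => (h1 j).symm

lemma two_le_of_even_ne_zero {n : ℕ} (h0 : n ≠ 0) (h2 : (n : F2) = 0) : 2 ≤ n := by
  rcases n with _ | n
  · exact absurd rfl h0
  rcases n with _ | n
  · exact absurd h2 (by decide)
  · omega

/-- The core counting inequality. -/
lemma counting (P : Finset (Finset ι)) (Cs : J → Finset ι)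
    (hcard : ∀ A ∈ P, 2 ≤ A.card)
    (hCpart : ∀ x : ι, ∃! j : J, x ∈ Cs j)
    (hconn : ∀ j : J, ∃ A ∈ P, (A ∩ Cs j).Nonempty ∧ ¬ A ⊆ Cs j) :
    (Fintype.card J : ℤ) ≤
      2 * (Module.finrank F2 (Submodule.span F2
          ((fun A : Finset ι => (fun j => ((A ∩ Cs j).card : F2))) '' ↑P))) +
        ∑ A ∈ P, ((A.card : ℤ) - 2) := by
  classical
  set y : Finset ι → (J → F2) := fun A => (fun j => ((A ∩ Cs j).card : F2)) with hy
  -- extract a basis of the span from among the rows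
  obtain ⟨b, hb_sub, hb_span, hb_ind⟩ := exists_linearIndependent F2 (y '' ↑P)
  have hb_fin : b.Finite := (P.finite_toSet.image y).subset hb_sub
  haveI : Fintype b := hb_fin.fintype
  set d := Module.finrank F2 (Submodule.span F2 (y '' ↑P)) with hd
  have hdcard : d = hb_fin.toFinset.card := by
    rw [hd, ← hb_span]
    rw [finrank_span_set_eq_card hb_ind]
    rw [Set.toFinset_card, Set.Finite.card_toFinset]
  -- choice of a block for each basis row
  have hch : ∀ v ∈ b, ∃ A, A ∈ P ∧ y A = v := by
    intro v hv
    obtain ⟨A, hA, rfl⟩ := hb_sub hv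
    exact ⟨A, Finset.mem_coe.mp hA, rfl⟩
  set ch : (J → F2) → Finset ι := fun v => if h : ∃ A, A ∈ P ∧ y A = v then h.choose else ∅
    with hchdef
  have hch_mem : ∀ v ∈ b, ch v ∈ P := by
    intro v hv
    rw [hchdef]; dsimp only
    rw [dif_pos (hch v hv)]
    exact (hch v hv).choose_spec.1
  have hch_y : ∀ v ∈ b, y (ch v) = v := by
    intro v hv
    rw [hchdef]; dsimp only
    rw [dif_pos (hch v hv)]
    exact (hch v hv).choose_spec.2
  set bfin : Finset (J → F2) := hb_fin.toFinset with hbfin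
  set Bidx : Finset (Finset ι) := bfin.image ch with hBidx
  have hmem_bfin : ∀ v, v ∈ bfin ↔ v ∈ b := by intro v; rw [hbfin]; exact Set.Finite.mem_toFinset _
  have hBidx_sub : Bidx ⊆ P := by
    intro A hA
    rw [hBidx] at hA
    obtain ⟨v, hv, rfl⟩ := Finset.mem_image.mp hA
    exact hch_mem v ((hmem_bfin v).mp hv)
  have hinj : Set.InjOn ch ↑bfin := by
    intro v hv w hw h
    rw [Finset.mem_coe, hmem_bfin] at hv hw
    rw [← hch_y v hv, ← hch_y w hw, h]
  have hBidx_card : Bidx.card = d := by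
    rw [hBidx, Finset.card_image_of_injOn hinj, hdcard, hbfin]
  -- supports, odd and even cycles
  set supp : (J → F2) → Finset J := fun v => Finset.univ.filter (fun j => v j ≠ 0) with hsupp
  set O : Finset J := Finset.univ.filter (fun j => ∃ A ∈ P, y A j ≠ 0) with hO
  set E : Finset J := Finset.univ.filter (fun j => ¬ ∃ A ∈ P, y A j ≠ 0) with hE
  have hOE : O.card + E.card = Fintype.card J := by
    rw [hO, hE, Finset.card_filter_add_card_filter_not, Finset.card_univ]
  have hEzero : ∀ j ∈ E, ∀ A ∈ P, y A j = 0 := by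
    intro j hj A hA
    rw [hE, Finset.mem_filter] at hj
    by_contra hne
    exact hj.2 ⟨A, hA, hne⟩
  -- coverage of odd cycles by basis supports
  have hcover : O ⊆ bfin.biUnion supp := by
    intro j hj
    rw [hO, Finset.mem_filter] at hj
    obtain ⟨-, A, hA, hAj⟩ := hj
    by_contra hnot
    simp only [Finset.mem_biUnion] at hnot
    push_neg at hnot
    have hallzero : ∀ v ∈ b, v j = 0 := by
      intro v hv
      by_contra hvj
      exact hnot v ((hmem_bfin v).mpr hv) (by rw [hsupp]; simp [hvj])
    have hyA : y A ∈ Submodule.span F2 b := by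
      rw [hb_span]
      exact Submodule.subset_span ⟨A, hA, rfl⟩
    have : Submodule.span F2 b ≤ LinearMap.ker (LinearMap.proj (R := F2) (φ := fun _ : J => F2) j) := by
      rw [Submodule.span_le]
      intro v hv
      simp only [SetLike.mem_coe, LinearMap.mem_ker, LinearMap.proj_apply]
      exact hallzero v hv
    exact hAj (this hyA)
  have hOcard : (O.card : ℤ) ≤ ∑ A ∈ Bidx, ((supp (y A)).card : ℤ) := by
    have h1 : O.card ≤ ∑ v ∈ bfin, (supp v).card :=
      le_trans (Finset.card_le_card hcover) (Finset.card_biUnion_le)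
    have h2 : ∑ A ∈ Bidx, (supp (y A)).card = ∑ v ∈ bfin, (supp v).card := by
      rw [hBidx, Finset.sum_image (fun v hv w hw h => hinj (Finset.mem_coe.mpr hv) (Finset.mem_coe.mpr hw) h)]
      apply Finset.sum_congr rfl
      intro v hv
      rw [hch_y v ((hmem_bfin v).mp hv)]
    calc (O.card : ℤ) ≤ (∑ v ∈ bfin, (supp v).card : ℕ) := by exact_mod_cast h1
      _ = (∑ A ∈ Bidx, (supp (y A)).card : ℕ) := by rw [h2]
      _ = ∑ A ∈ Bidx, ((supp (y A)).card : ℤ) := by push_cast; ring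
  -- charging of even cycles
  set charge : J → Finset ι := fun j => (hconn j).choose with hcharge
  have hcharge_mem : ∀ j, charge j ∈ P := fun j => (hconn j).choose_spec.1
  have hcharge_ne : ∀ j, ((charge j) ∩ Cs j).Nonempty := fun j => (hconn j).choose_spec.2.1
  have hcharge_nsub : ∀ j, ¬ (charge j) ⊆ Cs j := fun j => (hconn j).choose_spec.2.2
  set q : Finset ι → ℕ := fun A => (E.filter (fun j => charge j = A)).card with hq
  have hqsum : ∑ A ∈ P, q A = E.card := by
    rw [hq]
    exact (Finset.card_eq_sum_card_fiberwise (fun j _ => hcharge_mem j)).symm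
  -- two key pointwise inequalities
  have hcharged_two : ∀ j ∈ E, ∀ A, charge j = A → 2 ≤ (A ∩ Cs j).card := by
    intro j hj A hA
    subst hA
    have h0 : 0 < ((charge j) ∩ Cs j).card := Finset.card_pos.mpr (hcharge_ne j)
    have h2 : (((charge j) ∩ Cs j).card : F2) = 0 := hEzero j hj _ (hcharge_mem j)
    exact two_le_of_even_ne_zero (by omega) h2
  have hK1 : ∀ A ∈ P, (supp (y A)).card + 2 * q A ≤ A.card := by
    intro A hA
    have hsplit := card_split Cs hCpart A
    set T1 := supp (y A) with hT1
    set T2 := E.filter (fun j => charge j = A) with hT2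
    have hdisj : Disjoint T1 T2 := by
      rw [Finset.disjoint_left]
      intro j hj1 hj2
      rw [hT2, Finset.mem_filter] at hj2
      have := hEzero j hj2.1 A hA
      rw [hT1, hsupp, Finset.mem_filter] at hj1
      exact hj1.2 this
    have hsub : T1 ∪ T2 ⊆ Finset.univ := Finset.subset_univ _
    have hbound : ∑ j ∈ T1 ∪ T2, (A ∩ Cs j).card ≤ ∑ j : J, (A ∩ Cs j).card :=
      Finset.sum_le_sum_of_subset hsub
    have hsum_union : ∑ j ∈ T1 ∪ T2, (A ∩ Cs j).card
        = ∑ j ∈ T1, (A ∩ Cs j).card + ∑ j ∈ T2, (A ∩ Cs j).card :=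
      Finset.sum_union hdisj
    have hT1bound : T1.card ≤ ∑ j ∈ T1, (A ∩ Cs j).card := by
      rw [Finset.card_eq_sum_ones T1]
      apply Finset.sum_le_sum
      intro j hj
      rw [hT1, hsupp, Finset.mem_filter] at hj
      have : (A ∩ Cs j).card ≠ 0 := by
        intro h0
        exact hj.2 (by rw [hy]; dsimp only; rw [h0]; norm_num)
      omega
    have hT2bound : 2 * T2.card ≤ ∑ j ∈ T2, (A ∩ Cs j).card := by
      calc 2 * T2.card = ∑ _j ∈ T2, 2 := by rw [Finset.sum_const, smul_eq_mul, mul_comm]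
        _ ≤ ∑ j ∈ T2, (A ∩ Cs j).card := by
            apply Finset.sum_le_sum
            intro j hj
            rw [hT2, Finset.mem_filter] at hj
            exact hcharged_two j hj.1 A hj.2
    calc T1.card + 2 * q A = T1.card + 2 * T2.card := rfl
      _ ≤ ∑ j ∈ T1, (A ∩ Cs j).card + ∑ j ∈ T2, (A ∩ Cs j).card := by
          exact Nat.add_le_add hT1bound hT2bound
      _ = ∑ j ∈ T1 ∪ T2, (A ∩ Cs j).card := hsum_union.symm
      _ ≤ ∑ j : J, (A ∩ Cs j).card := hbound
      _ = A.card := hsplit.symm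
  have hK2 : ∀ A ∈ P, q A + 2 ≤ A.card := by
    intro A hA
    rcases Nat.lt_or_ge (q A) 1 with hq0 | hq1
    · have : q A = 0 := by omega
      rw [this]
      exact hcard A hA
    rcases Nat.lt_or_ge (q A) 2 with hq1' | hq2
    · -- q A = 1
      have hqA : q A = 1 := by omega
      obtain ⟨j₀, hj₀⟩ : ∃ j₀, j₀ ∈ E.filter (fun j => charge j = A) := by
        have : (E.filter (fun j => charge j = A)).card = 1 := hqA
        rw [Finset.card_eq_one] at this
        obtain ⟨j₀, hj₀⟩ := this
        exact ⟨j₀, by rw [hj₀]; exact Finset.mem_singleton_self _⟩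
      rw [Finset.mem_filter] at hj₀
      have h2 : 2 ≤ (A ∩ Cs j₀).card := hcharged_two j₀ hj₀.1 A hj₀.2
      obtain ⟨x, hxA, hxn⟩ : ∃ x ∈ A, x ∉ Cs j₀ := by
        by_contra hcon
        push_neg at hcon
        apply hcharge_nsub j₀
        rw [hj₀.2]
        intro z hz
        exact hcon z hz
      obtain ⟨j₁, hj₁, -⟩ := hCpart x
      have hne : j₁ ≠ j₀ := fun h => hxn (h ▸ hj₁)
      have h1 : 1 ≤ (A ∩ Cs j₁).card :=
        Finset.card_pos.mpr ⟨x, Finset.mem_inter.mpr ⟨hxA, hj₁⟩⟩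
      have hsplit := card_split Cs hCpart A
      have : (A ∩ Cs j₀).card + (A ∩ Cs j₁).card ≤ ∑ j : J, (A ∩ Cs j).card := by
        have := Finset.sum_le_sum_of_subset
          (Finset.subset_univ ({j₀, j₁} : Finset J)) (f := fun j => (A ∩ Cs j).card)
        rwa [Finset.sum_pair (Ne.symm hne)] at this
      omega
    · -- q A ≥ 2
      have := hK1 A hA
      omega
  -- assemble
  have hsum_split : ∑ A ∈ P, ((A.card : ℤ) - 2)
      = ∑ A ∈ Bidx, ((A.card : ℤ) - 2) + ∑ A ∈ P \ Bidx, ((A.card : ℤ) - 2) := by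
    rw [add_comm, Finset.sum_sdiff hBidx_sub]
  have hB1 : ∑ A ∈ Bidx, ((A.card : ℤ) - 2)
      ≥ ∑ A ∈ Bidx, (((supp (y A)).card : ℤ) + (q A : ℤ) - 2) := by
    apply Finset.sum_le_sum
    intro A hA
    have := hK1 A (hBidx_sub hA)
    have h2q : (q A : ℤ) ≤ 2 * (q A : ℤ) := by omega
    push_cast at this ⊢
    omega
  have hB2 : ∑ A ∈ P \ Bidx, ((A.card : ℤ) - 2) ≥ ∑ A ∈ P \ Bidx, (q A : ℤ) := by
    apply Finset.sum_le_sum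
    intro A hA
    have := hK2 A (Finset.mem_sdiff.mp hA).1
    push_cast
    omega
  have hqsplit : ∑ A ∈ Bidx, (q A : ℤ) + ∑ A ∈ P \ Bidx, (q A : ℤ) = (E.card : ℤ) := by
    rw [add_comm, Finset.sum_sdiff hBidx_sub]
    exact_mod_cast congrArg (Nat.cast : ℕ → ℤ) hqsum
  have hcardJ : (Fintype.card J : ℤ) = (O.card : ℤ) + (E.card : ℤ) := by
    exact_mod_cast congrArg (Nat.cast : ℕ → ℤ) hOE.symm
  have hBsum : ∑ A ∈ Bidx, (((supp (y A)).card : ℤ) + (q A : ℤ) - 2)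
      = ∑ A ∈ Bidx, ((supp (y A)).card : ℤ) + ∑ A ∈ Bidx, (q A : ℤ) - 2 * Bidx.card := by
    rw [Finset.sum_sub_distrib, Finset.sum_add_distrib, Finset.sum_const]
    push_cast
    ring
  have hfinal : (Fintype.card J : ℤ) ≤ 2 * (d : ℤ) + ∑ A ∈ P, ((A.card : ℤ) - 2) := by
    rw [hcardJ, hsum_split]
    have : (Bidx.card : ℤ) = (d : ℤ) := by exact_mod_cast congrArg (Nat.cast : ℕ → ℤ) hBidx_card
    calc (O.card : ℤ) + (E.card : ℤ)
        ≤ (∑ A ∈ Bidx, ((supp (y A)).card : ℤ)) + (E.card : ℤ) := by linarith [hOcard]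
      _ = (∑ A ∈ Bidx, ((supp (y A)).card : ℤ)) + (∑ A ∈ Bidx, (q A : ℤ) + ∑ A ∈ P \ Bidx, (q A : ℤ)) := by
          rw [hqsplit]
      _ ≤ 2 * (d : ℤ) + (∑ A ∈ Bidx, ((A.card : ℤ) - 2) + ∑ A ∈ P \ Bidx, ((A.card : ℤ) - 2)) := by
          have := hBsum
          linarith [hB1, hB2]
  exact hfinal

end Counting

end AZAux

set_option maxHeartbeats 1000000 in
set_option synthInstance.maxHeartbeats 200000 in
open AZAux Module Submodule in
/-- Proposition 3.1 of Anderson–Zeitouni (improved form): if `Π` is a partition of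
`{1,…,2k}` with blocks of size at least `2`, `P₀, P₁` are perfect matchings,
`#(Π ∨ P₀ ∨ P₁) = 1` and `#(P₀ ∨ P₁) = r ≤ k`, then
`#(P₀ ∨ Π) + #(P₁ ∨ Π) ≤ (#Π + 1)·1[r=1] + min{#Π + 1, k + 1 − r/2}·1[r≥2]`. -/
theorem anderson_zeitouni_bound (k : ℕ) (hk : 0 < k)
    (Pπ P₀ P₁ : Finset (Finset (Fin (2 * k))))
    (hP : IsSetPartition Pπ) (hcard : ∀ A ∈ Pπ, 2 ≤ A.card)
    (hP₀ : IsPerfectMatching P₀) (hP₁ : IsPerfectMatching P₁)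
    (r : ℕ) (hr : 1 ≤ r) (hrk : r ≤ k)
    (hjoin1 : joinCard (joinBlocks Pπ P₀) P₁ = 1)
    (hjoinr : joinCard P₀ P₁ = r) :
    ((joinCard P₀ Pπ : ℝ) + (joinCard P₁ Pπ : ℝ)) ≤
      (if r = 1 then (Pπ.card : ℝ) + 1 else 0) +
        (if 2 ≤ r then min ((Pπ.card : ℝ) + 1) ((k : ℝ) + 1 - (r : ℝ) / 2) else 0) := by
    classical
  haveI : Nonempty (Fin (2 * k)) := ⟨⟨0, by omega⟩⟩
  set m := Pπ.card with hm
  set a := joinCard P₀ Pπ with ha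
  set b := joinCard P₁ Pπ with hb
  set Wπ := inv (blockRel Pπ) with hWπ
  set W0 := inv (blockRel P₀) with hW0
  set W1 := inv (blockRel P₁) with hW1
  set X := inv (joinRel P₀ Pπ) with hX
  set Y := inv (joinRel P₁ Pπ) with hY
  have hXeq : X = W0 ⊓ Wπ := inv_joinRel P₀ Pπ
  have hYeq : Y = W1 ⊓ Wπ := inv_joinRel P₁ Pπ
  have hXrank : finrank F2 X = a := finrank_inv_joinRel P₀ Pπ
  have hYrank : finrank F2 Y = b := finrank_inv_joinRel P₁ Pπ
  -- the triple intersection has dimension 1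
  have hT : inv (joinRel (joinBlocks Pπ P₀) P₁) = X ⊓ Y := by
    rw [inv_joinRel, inv_congr (blockRel_joinBlocks Pπ P₀), inv_joinRel, hXeq, hYeq]
    ext f
    simp only [Submodule.mem_inf]
    tauto
  have hXY1 : finrank F2 ↥(X ⊓ Y) = 1 := by
    rw [← hT, finrank_inv_joinRel, hjoin1]
  -- dimension identity
  have hsupinf := Submodule.finrank_sup_add_finrank_inf_eq X Y
  rw [hXY1, hXrank, hYrank] at hsupinf
  -- a + b = finrank (X ⊔ Y) + 1
  -- the cycles
  set s01 := joinSetoid P₀ P₁ with hs01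
  set J := Quotient s01 with hJ
  have hrJ : Fintype.card J = r := by
    have h := joinCard_eq_card_quotient P₀ P₁
    rw [hjoinr] at h
    exact h.symm
  set Cs : J → Finset (Fin (2 * k)) := fun q => Finset.univ.filter (fun x => Quotient.mk s01 x = q)
    with hCs
  have hmemCs : ∀ (x : Fin (2 * k)) (q : J), x ∈ Cs q ↔ Quotient.mk s01 x = q := by
    intro x q
    rw [hCs]
    simp
  have hCpart : ∀ x : Fin (2 * k), ∃! j : J, x ∈ Cs j := by
    intro x
    refine ⟨Quotient.mk s01 x, (hmemCs x _).mpr rfl, ?_⟩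
    intro j hj
    exact ((hmemCs x j).mp hj).symm
  have hsat : ∀ (M : Finset (Finset (Fin (2 * k)))), (∀ x y, blockRel M x y → joinRel P₀ P₁ x y) →
      ∀ (q : J), ∀ x ∈ Cs q, ∀ y, blockRel M x y → y ∈ Cs q := by
    intro M hM q x hx y hxy
    rw [hmemCs] at hx ⊢
    rw [← hx]
    exact (Quotient.sound (hM x y hxy)).symm
  have hsat0 : ∀ (q : J), ∀ x ∈ Cs q, ∀ y, blockRel P₀ x y → y ∈ Cs q :=
    hsat P₀ (fun x y h => Relation.EqvGen.rel x y (Or.inl h))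
  have hsat1 : ∀ (q : J), ∀ x ∈ Cs q, ∀ y, blockRel P₁ x y → y ∈ Cs q :=
    hsat P₁ (fun x y h => Relation.EqvGen.rel x y (Or.inr h))
  -- the linear map θ
  set θ : (Fin (2 * k) → F2) →ₗ[F2] (J → F2) :=
    { toFun := fun f => (fun q => ∑ x ∈ Cs q, f x)
      map_add' := by
        intro f g
        funext q
        simp [Finset.sum_add_distrib]
      map_smul' := by
        intro c f
        funext q
        simp [Finset.mul_sum] } with hθ
  have hθapp : ∀ (f : Fin (2 * k) → F2) (q : J), θ f q = ∑ x ∈ Cs q, f x := fun f q => rfl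
  have hW0ker : W0 ≤ LinearMap.ker θ := by
    intro f hf
    rw [LinearMap.mem_ker]
    funext q
    rw [hθapp]
    exact sum_eq_zero_of_saturated hP₀ (hsat0 q) hf
  have hW1ker : W1 ≤ LinearMap.ker θ := by
    intro f hf
    rw [LinearMap.mem_ker]
    funext q
    rw [hθapp]
    exact sum_eq_zero_of_saturated hP₁ (hsat1 q) hf
  have hXYW : X ⊔ Y ≤ Wπ := sup_le (hXeq ▸ inf_le_right) (hYeq ▸ inf_le_right)
  have hXYker : X ⊔ Y ≤ LinearMap.ker θ :=
    sup_le (le_trans (hXeq ▸ inf_le_left) hW0ker) (le_trans (hYeq ▸ inf_le_left) hW1ker)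
  -- restrict θ to Wπ
  set thP : Wπ →ₗ[F2] (J → F2) := θ.comp Wπ.subtype with hthP
  set d := finrank F2 (LinearMap.range thP) with hd
  have hWπrank : finrank F2 Wπ = m := finrank_inv_blockRel hP
  have hranknull := LinearMap.finrank_range_add_finrank_ker thP
  -- finrank (X ⊔ Y) ≤ finrank (ker thP)
  have hXYd : finrank F2 ↥(X ⊔ Y) ≤ finrank F2 (LinearMap.ker thP) := by
    have hequiv := Submodule.comapSubtypeEquivOfLe hXYW
    have hle : Submodule.comap Wπ.subtype (X ⊔ Y) ≤ LinearMap.ker thP := by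
      intro f hf
      rw [Submodule.mem_comap] at hf
      rw [LinearMap.mem_ker, hthP, LinearMap.comp_apply]
      have := hXYker hf
      rw [LinearMap.mem_ker] at this
      exact this
    calc finrank F2 ↥(X ⊔ Y) = finrank F2 (Submodule.comap Wπ.subtype (X ⊔ Y)) :=
          (hequiv.finrank_eq).symm
      _ ≤ finrank F2 (LinearMap.ker thP) := Submodule.finrank_mono hle
  have hkey1 : finrank F2 ↥(X ⊔ Y) + d ≤ m := by
    rw [hd]
    omega
  -- identify the range of thP with the span of the parity rows
  set y : Finset (Fin (2 * k)) → (J → F2) := fun A => (fun j => ((A ∩ Cs j).card : F2)) with hy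
  have hθind : ∀ A : Finset (Fin (2 * k)), θ (indf A) = y A := by
    intro A
    funext q
    rw [hθapp]
    simp only [hy, indf]
    have hfe : (Cs q).filter (fun x => x ∈ A) = A ∩ Cs q := by
      ext x
      simp only [Finset.mem_filter, Finset.mem_inter]
      tauto
    have key : ((∑ x ∈ Cs q, (if x ∈ A then 1 else 0 : ℕ) : ℕ) : F2) = ((A ∩ Cs q).card : F2) := by
      rw [← Finset.card_filter, hfe]
    rw [← key, Nat.cast_sum]
    apply Finset.sum_congr rfl
    intro x _
    by_cases hx : x ∈ A <;> simp [hx]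
  have hrange : LinearMap.range thP = Submodule.span F2 (y '' ↑Pπ) := by
    rw [hthP, LinearMap.range_comp, Submodule.range_subtype, hWπ,
      inv_blockRel_eq_span hP, Submodule.map_span, ← Set.image_comp]
    congr 1
    apply Set.image_congr
    intro A _
    exact hθind A
  -- connectivity hypothesis for the counting lemma
  have hconn : 2 ≤ r → ∀ j : J, ∃ A ∈ Pπ, (A ∩ Cs j).Nonempty ∧ ¬ A ⊆ Cs j := by
    intro h2r j
    by_contra hcon
    push_neg at hcon
    -- then Cs j is closed under the triple join relation
    have hclosed : ∀ x y : Fin (2 * k), joinRel (joinBlocks Pπ P₀) P₁ x y → (x ∈ Cs j ↔ y ∈ Cs j) := by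
      intro x y hxy
      induction hxy with
      | rel u v h =>
        rcases h with h | h
        · have huv : joinRel Pπ P₀ u v := (blockRel_joinBlocks Pπ P₀ u v).mp h
          clear h
          induction huv with
          | rel u' v' h' =>
            rcases h' with h' | h'
            · obtain ⟨A, hA, huA, hvA⟩ := h'
              constructor
              · intro hu
                exact hcon A hA ⟨u', Finset.mem_inter.mpr ⟨huA, hu⟩⟩ hvA
              · intro hv
                exact hcon A hA ⟨v', Finset.mem_inter.mpr ⟨hvA, hv⟩⟩ huA
            · constructor
              · intro hu; exact hsat0 j u' hu v' h'
              · intro hv; exact hsat0 j v' hv u' ⟨h'.choose, h'.choose_spec.1,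
                  h'.choose_spec.2.2, h'.choose_spec.2.1⟩
          | refl u' => rfl
          | symm u' v' _ ih => exact ih.symm
          | trans u' v' w' _ _ ih₁ ih₂ => exact ih₁.trans ih₂
        · constructor
          · intro hu; exact hsat1 j u hu v h
          · intro hv; exact hsat1 j v hv u ⟨h.choose, h.choose_spec.1,
              h.choose_spec.2.2, h.choose_spec.2.1⟩
      | refl u => rfl
      | symm u v _ ih => exact ih.symm
      | trans u v w _ _ ih₁ ih₂ => exact ih₁.trans ih₂
    -- but there are at least two cycles, contradiction with single triple class
    have hJ2 : 1 < Fintype.card J := by rw [hrJ]; omega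
    obtain ⟨j', hj'⟩ := Fintype.exists_ne_of_one_lt_card hJ2 j
    have htriple1 : Fintype.card (Quotient (joinSetoid (joinBlocks Pπ P₀) P₁)) = 1 := by
      have h := joinCard_eq_card_quotient (joinBlocks Pπ P₀) P₁
      rw [hjoin1] at h
      exact h.symm
    have hxx' : (Quotient.mk (joinSetoid (joinBlocks Pπ P₀) P₁) j.out)
        = Quotient.mk (joinSetoid (joinBlocks Pπ P₀) P₁) j'.out :=
      Fintype.card_le_one_iff.mp (le_of_eq htriple1) _ _
    have hrel : joinRel (joinBlocks Pπ P₀) P₁ j.out j'.out := Quotient.exact hxx'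
    have hx : j.out ∈ Cs j := (hmemCs _ _).mpr (Quotient.out_eq j)
    have hx' : j'.out ∈ Cs j := (hclosed _ _ hrel).mp hx
    have : j' = j := by
      rw [hmemCs] at hx'
      rw [← hx', Quotient.out_eq]
    exact hj' this
  -- apply the counting lemma
  have hcount : 2 ≤ r → (r : ℤ) ≤ 2 * (d : ℤ) + (2 * (k : ℤ) - 2 * (m : ℤ)) := by
    intro h2r
    have hc := counting Pπ Cs hcard hCpart (hconn h2r)
    rw [hrJ] at hc
    rw [← hy] at hc
    have hdspan : d = finrank F2 (Submodule.span F2 (y '' ↑Pπ)) := by rw [hd, hrange]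
    rw [← hdspan] at hc
    have hsum : ∑ A ∈ Pπ, ((A.card : ℤ) - 2) = 2 * (k : ℤ) - 2 * (m : ℤ) := by
      rw [Finset.sum_sub_distrib, Finset.sum_const]
      have h2k : ∑ A ∈ Pπ, ((A.card : ℤ)) = 2 * (k : ℤ) := by
        have hs := sum_card_partition hP
        rw [Fintype.card_fin] at hs
        exact_mod_cast hs
      rw [h2k, hm]
      push_cast
      ring
    rw [hsum] at hc
    exact hc
  -- final bookkeeping
  have hab1 : a + b ≤ m + 1 := by
    have hXYm : finrank F2 ↥(X ⊔ Y) ≤ m := by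
      rw [← hWπrank]
      exact Submodule.finrank_mono hXYW
    omega
  have habd : a + b + d ≤ m + 1 := by omega
  rcases eq_or_lt_of_le hr with h1 | h2
  · -- r = 1
    rw [if_pos h1.symm, if_neg (by omega), add_zero]
    have : ((a : ℝ) + b) ≤ (m : ℝ) + 1 := by exact_mod_cast hab1
    exact this
  · -- 2 ≤ r
    have h2r : 2 ≤ r := h2
    rw [if_neg (by omega), if_pos h2r, zero_add]
    apply le_min
    · have : ((a : ℝ) + b) ≤ (m : ℝ) + 1 := by exact_mod_cast hab1
      exact this
    · have c2 := hcount h2r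
      have c1' : (a : ℝ) + (b : ℝ) + (d : ℝ) ≤ (m : ℝ) + 1 := by exact_mod_cast habd
      have c2' : (r : ℝ) ≤ 2 * (d : ℝ) + (2 * (k : ℝ) - 2 * (m : ℝ)) := by exact_mod_cast c2
      linarith
end
end

section
/- Let c ∈ (0,∞), and for each n let T = T_n be the n×n real symmetric matrix with diagonal entries 1 and off-diagonal entries −1/(n−1). For z in the upper half-plane ℂ⁺, let m(z) ∈ ℂ⁺ satisfy m(z) = [(1 − c − c·z·m(z)) − z]^{−1} and set m̲(z) = −(1−c)/z + c·m(z). Then for any fixed z, z_1, z_2 ∈ ℂ⁺, as n → ∞: (a) (1/n) Σ_{i=1}^{n} e_i^T T^{1/2} (m̲(z_1) T + I)^{−1} T^{1/2} e_i · e_i^T T^{1/2} (m̲(z_2) T + I)^{−1} T^{1/2} e_i → (m̲(z_1)+1)^{−1} (m̲(z_2)+1)^{−1}; and (b) (1/n) Σ_{i=1}^{n} e_i^T T^{1/2} (m̲(z) T + I)^{−1} T^{1/2} e_i · e_i^T T^{1/2} (m̲(z) T + I)^{−2} T^{1/2} e_i → (m̲(z)+1)^{−3}; here e_i is the n×1 vector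 with a 1 in the i-th coordinate and 0 elsewhere, and T^{1/2} is the positive semidefinite square root of T. -/
open Matrix Filter
open scoped ComplexOrder

noncomputable section

/-- The population covariance matrix `T = E[ZᵀZ]` (as a complex matrix): diagonal entries
`1` and off-diagonal entries `−1/(n−1)`. -/
def Tmat (n : ℕ) : Matrix (Fin n) (Fin n) ℂ :=
  Matrix.of fun i j => if i = j then 1 else -(1 / ((n : ℂ) - 1))

/-- The companion Stieltjes transform `m̲(z) = −(1−c)/z + c·m(z)`. -/
def mUnder (c : ℝ) (m : ℂ → ℂ) (z : ℂ) : ℂ :=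
  -(1 - (c : ℂ)) / z + (c : ℂ) * m z

lemma alpha_lim : Tendsto (fun n : ℕ => (n:ℂ)/((n:ℂ)-1)) atTop (nhds 1) := by
  have h1 : Tendsto (fun n:ℕ => (n:ℝ) - 1) atTop atTop :=
    tendsto_atTop_add_const_right _ _ tendsto_natCast_atTop_atTop
  have h2 : Tendsto (fun n:ℕ => ((n:ℝ)-1)⁻¹) atTop (nhds 0) := h1.inv_tendsto_atTop
  have hr : Tendsto (fun n:ℕ => (n:ℝ)/((n:ℝ)-1)) atTop (nhds 1) := by
    have h3 : Tendsto (fun n:ℕ => 1 + ((n:ℝ)-1)⁻¹) atTop (nhds 1) := by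
      simpa using (tendsto_const_nhds.add h2)
    apply h3.congr'
    filter_upwards [eventually_ge_atTop 2] with n hn
    have : (n:ℝ) - 1 ≠ 0 := by
      have : (2:ℝ) ≤ (n:ℝ) := by exact_mod_cast hn
      nlinarith
    field_simp; ring
  have := (Complex.continuous_ofReal.tendsto 1).comp hr
  have heq : ∀ n : ℕ, (Complex.ofReal ∘ fun n:ℕ => (n:ℝ)/((n:ℝ)-1)) n = (n:ℂ)/((n:ℂ)-1) := by
    intro n; simp only [Function.comp_apply]; push_cast; ring
  simpa using this.congr heq

lemma mUnder_keys (c : ℝ) (m : ℂ → ℂ)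
    (hm : ∀ z : ℂ, 0 < z.im → 0 < (m z).im)
    (hfix : ∀ z : ℂ, 0 < z.im → m z = ((1 - (c : ℂ) - (c : ℂ) * z * m z) - z)⁻¹)
    (z : ℂ) (hz : 0 < z.im) :
    (mUnder c m z + 1) ≠ 0 ∧ (mUnder c m z).im ≠ 0 := by
  have hz0 : z ≠ 0 := by intro h; rw [h] at hz; simp at hz
  have hm0 : m z ≠ 0 := by
    intro h; have := hm z hz; rw [h] at this; simp at this
  set D : ℂ := (1 - (c : ℂ) - (c : ℂ) * z * m z) - z with hDdef
  have hD : m z = D⁻¹ := hfix z hz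
  have hDne : D ≠ 0 := by
    intro h; rw [h] at hD; simp at hD; exact hm0 hD
  have hmD : m z * D = 1 := by rw [hD]; field_simp
  set u : ℂ := mUnder c m z with hu
  have key1 : (u + 1) * (z * m z) = -1 := by
    rw [hu, mUnder]
    field_simp
    linear_combination (-1) * hmD
  have hu1 : u + 1 ≠ 0 := by
    intro h
    rw [h, zero_mul] at key1
    exact absurd key1 (by norm_num)
  refine ⟨hu1, ?_⟩
  have key2 : z * (u * (u + 1)) = (-(1 - (c:ℂ))) * (u + 1) - c := by
    have hzu : z * u = -(1 - (c:ℂ)) + (c:ℂ) * (z * m z) := by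
      rw [hu, mUnder]; field_simp
    linear_combination (u+1) * hzu + (c:ℂ) * key1
  intro him
  have hur : u = ((u.re : ℝ) : ℂ) := by
    apply Complex.ext <;> simp [him]
  set r : ℝ := u.re
  have him2 : (z * (u * (u+1))).im = z.im * (r * (r+1)) := by
    rw [hur]
    have : ((r:ℂ)) * ((r:ℂ) + 1) = ((r * (r+1) : ℝ) : ℂ) := by push_cast; ring
    rw [this]
    simp [Complex.mul_im]
  have him3 : ((-(1 - (c:ℂ))) * (u + 1) - (c:ℂ)).im = 0 := by
    rw [hur]
    have : (-(1 - (c:ℂ))) * ((r:ℂ) + 1) - (c:ℂ) = (((-(1-c)) * (r+1) - c : ℝ) : ℂ) := by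
      push_cast; ring
    rw [this, Complex.ofReal_im]
  have h0 : z.im * (r * (r+1)) = 0 := by rw [← him2, key2, him3]
  have hrr : r * (r + 1) = 0 := (mul_eq_zero.mp h0).resolve_left (ne_of_gt hz)
  rcases mul_eq_zero.mp hrr with h | h
  · -- r = 0, so u = 0; key2 : 0 = -(1-c)*1 - c = -1
    have hu0 : u = 0 := by rw [hur, h]; simp
    rw [hu0] at key2
    have : (0:ℂ) = -1 := by linear_combination key2
    exact absurd this (by norm_num)
  · -- r = -1, so u + 1 = 0
    have : u + 1 = 0 := by rw [hur]; rw [show r = -1 by linarith]; simp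
    exact hu1 this

lemma resolvent_eq (n : ℕ) (hn : 2 ≤ n) (u : ℂ)
    (hα : u * ((n:ℂ)/((n:ℂ)-1)) + 1 ≠ 0)
    (S : Matrix (Fin n) (Fin n) ℂ) (hS : S.PosSemidef) (hSq : S ^ 2 = Tmat n) :
    S * (u • Tmat n + 1)⁻¹ * S = (u * ((n:ℂ)/((n:ℂ)-1)) + 1)⁻¹ • Tmat n ∧
    S * ((u • Tmat n + 1) ^ 2)⁻¹ * S = ((u * ((n:ℂ)/((n:ℂ)-1)) + 1)⁻¹)^2 • Tmat n := by
  have hn0 : (n:ℂ) ≠ 0 := Nat.cast_ne_zero.mpr (by omega)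
  have hn1 : (n:ℂ) - 1 ≠ 0 := by
    have : (n:ℂ) ≠ 1 := by exact_mod_cast (by omega : n ≠ 1)
    exact sub_ne_zero.mpr this
  set α : ℂ := (n:ℂ)/((n:ℂ)-1) with hαdef
  set β : ℂ := (u * α + 1)⁻¹ with hβdef
  set J : Matrix (Fin n) (Fin n) ℂ := Matrix.of (fun _ _ => 1) with hJdef
  have hJJ : J * J = (n:ℂ) • J := by
    ext i j
    simp [hJdef, Matrix.mul_apply, Finset.sum_const]
  have hKey : ∀ x y x' y' : ℂ,
      (x • (1 : Matrix (Fin n) (Fin n) ℂ) + y • J) * (x' • 1 + y' • J)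
        = (x*x') • (1 : Matrix (Fin n) (Fin n) ℂ) + (x*y' + y*x' + y*y'*(n:ℂ)) • J := by
    intro x y x' y'
    simp only [add_mul, mul_add, Matrix.smul_mul, Matrix.mul_smul, smul_smul,
      one_mul, mul_one, hJJ]
    module
  have hT : Tmat n = α • (1 : Matrix (Fin n) (Fin n) ℂ) + (-(1/((n:ℂ)-1))) • J := by
    ext i j
    by_cases h : i = j
    · simp [Tmat, hJdef, h, Matrix.one_apply, hαdef]
      field_simp
      ring
    · simp [Tmat, hJdef, h, Matrix.one_apply]
  have hA : u • Tmat n + 1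
      = (u*α + 1) • (1 : Matrix (Fin n) (Fin n) ℂ) + (-(u/((n:ℂ)-1))) • J := by
    rw [hT]; module
  set y : ℂ := -(u/((n:ℂ)-1)) with hydef
  set B : Matrix (Fin n) (Fin n) ℂ := β • 1 + (-(y*β)) • J with hBdef
  have hxyn : (u*α+1) + y * (n:ℂ) = 1 := by
    rw [hydef, hαdef]; field_simp; ring
  have hAB : (u • Tmat n + 1) * B = 1 := by
    rw [hA, hBdef, hKey]
    have h1 : (u*α+1) * β = 1 := mul_inv_cancel₀ hα
    have h2 : (u*α+1)*(-(y*β)) + y*β + y*(-(y*β))*(n:ℂ) = 0 := by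
      have heq : (u*α+1)*(-(y*β)) + y*β + y*(-(y*β))*(n:ℂ)
          = (y*β) * (1 - ((u*α+1) + y*(n:ℂ))) := by ring
      rw [heq, hxyn]; ring
    rw [h1, h2]; module
  have hInv : (u • Tmat n + 1)⁻¹ = B := Matrix.inv_eq_right_inv hAB
  have hSS : S * S = Tmat n := by rw [← pow_two]; exact hSq
  have hJH : Jᴴ = J := by ext i j; simp [hJdef]
  have hSH : Sᴴ = S := hS.isHermitian
  have hTJ : Tmat n * J = 0 := by
    rw [hT, add_mul, Matrix.smul_mul, Matrix.smul_mul, Matrix.one_mul, hJJ, smul_smul,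
      ← add_smul]
    have : α + -(1/((n:ℂ)-1)) * (n:ℂ) = 0 := by rw [hαdef]; field_simp; ring
    rw [this, zero_smul]
  have hSJ : S * J = 0 := by
    have h1 : (S * J)ᴴ * (S * J) = 0 := by
      rw [conjTranspose_mul, hJH, hSH]
      calc J * S * (S * J) = J * (S * S) * J := by
            rw [Matrix.mul_assoc, Matrix.mul_assoc, Matrix.mul_assoc]
        _ = J * (Tmat n * J) := by rw [hSS, Matrix.mul_assoc]
        _ = 0 := by rw [hTJ, Matrix.mul_zero]
    exact Matrix.conjTranspose_mul_self_eq_zero.mp h1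
  have hJS : J * S = 0 := by
    have := congrArg conjTranspose hSJ
    rwa [conjTranspose_mul, hJH, hSH, conjTranspose_zero] at this
  have hSB : S * B = β • S := by
    rw [hBdef, mul_add, Matrix.mul_smul, Matrix.mul_smul, hSJ, smul_zero, add_zero,
      Matrix.mul_one]
  have hBS : B * S = β • S := by
    rw [hBdef, add_mul, Matrix.smul_mul, Matrix.smul_mul, hJS, smul_zero, add_zero,
      Matrix.one_mul]
  constructor
  · rw [hInv, Matrix.mul_assoc, hBS, Matrix.mul_smul, hSS]
  · have hAB2 : (u • Tmat n + 1) ^ 2 * (B * B) = 1 := by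
      rw [pow_two]
      calc (u • Tmat n + 1) * (u • Tmat n + 1) * (B * B)
          = (u • Tmat n + 1) * ((u • Tmat n + 1) * B) * B := by
            rw [Matrix.mul_assoc, Matrix.mul_assoc, Matrix.mul_assoc]
        _ = 1 := by rw [hAB, Matrix.mul_one, hAB]
    have hInv2 : ((u • Tmat n + 1) ^ 2)⁻¹ = B * B := Matrix.inv_eq_right_inv hAB2
    rw [hInv2]
    calc S * (B * B) * S = (S * B) * (B * S) := by
          rw [Matrix.mul_assoc, Matrix.mul_assoc, Matrix.mul_assoc]
      _ = β • (β • (S * S)) := by rw [hSB, hBS, Matrix.smul_mul, Matrix.mul_smul, smul_smul]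
      _ = β^2 • Tmat n := by rw [hSS, smul_smul, pow_two]


lemma alpha_ne (u : ℂ) (him : u.im ≠ 0) (n : ℕ) (hn : 2 ≤ n) :
    u * ((n:ℂ)/((n:ℂ)-1)) + 1 ≠ 0 := by
  intro h
  have hcast : ((n:ℂ)/((n:ℂ)-1)) = (((n:ℝ)/((n:ℝ)-1) : ℝ) : ℂ) := by push_cast; ring
  set a : ℝ := (n:ℝ)/((n:ℝ)-1) with hadef
  rw [hcast] at h
  have him0 : (u * (a:ℂ) + 1).im = 0 := by rw [h]; simp
  have him1 : u.im * a = 0 := by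
    simpa [Complex.add_im, Complex.mul_im, Complex.ofReal_im, Complex.ofReal_re,
      Complex.one_im] using him0
  have ha : a ≠ 0 := by
    have h2 : (2:ℝ) ≤ (n:ℝ) := by exact_mod_cast hn
    have : 0 < a := by rw [hadef]; apply div_pos <;> linarith
    exact ne_of_gt this
  rcases mul_eq_zero.mp him1 with h' | h'
  · exact him h'
  · exact ha h'

lemma beta_lim (u : ℂ) (hu1 : u + 1 ≠ 0) :
    Tendsto (fun n : ℕ => (u * ((n:ℂ)/((n:ℂ)-1)) + 1)⁻¹) atTop (nhds ((u+1)⁻¹)) := by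
  have h1 : Tendsto (fun n : ℕ => u * ((n:ℂ)/((n:ℂ)-1)) + 1) atTop (nhds (u + 1)) := by
    have := (alpha_lim.const_mul u).add_const 1
    simpa using this
  exact h1.inv₀ hu1

lemma diag_eq (c : ℝ) (m : ℂ → ℂ)
    (R : (n : ℕ) → Matrix (Fin n) (Fin n) ℂ)
    (hRpsd : ∀ n, (R n).PosSemidef) (hRsq : ∀ n, (R n) ^ 2 = Tmat n)
    (w : ℂ) (him : (mUnder c m w).im ≠ 0) (n : ℕ) (hn : 2 ≤ n) (i : Fin n) :
    (R n * (mUnder c m w • Tmat n + 1)⁻¹ * R n) i i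
        = (mUnder c m w * ((n:ℂ)/((n:ℂ)-1)) + 1)⁻¹ ∧
    (R n * ((((mUnder c m w • Tmat n + 1) : Matrix (Fin n) (Fin n) ℂ) ^ 2)⁻¹) * R n) i i
        = ((mUnder c m w * ((n:ℂ)/((n:ℂ)-1)) + 1)⁻¹)^2 := by
  obtain ⟨h1, h2⟩ := resolvent_eq n hn (mUnder c m w)
    (alpha_ne _ him n hn) (R n) (hRpsd n) (hRsq n)
  constructor
  · rw [h1]; simp [Tmat]
  · rw [h2]; simp [Tmat]

/-- Lemma 6.1: with `T = T_n` as above, `m(z)` the solution in `ℂ⁺` of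
`m(z) = [(1−c−c·z·m(z))−z]⁻¹`, `m̲(z) = −(1−c)/z + c·m(z)`, and `T^{1/2}` the positive
semidefinite square root of `T`, the two normalized diagonal sums converge to
`(m̲(z₁)+1)⁻¹(m̲(z₂)+1)⁻¹` and `(m̲(z)+1)⁻³`, respectively. -/
theorem spearman_population_resolvent_limits (c : ℝ) (hc : 0 < c)
    (m : ℂ → ℂ)
    (hm : ∀ z : ℂ, 0 < z.im → 0 < (m z).im)
    (hfix : ∀ z : ℂ, 0 < z.im → m z = ((1 - (c : ℂ) - (c : ℂ) * z * m z) - z)⁻¹)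
    (R : (n : ℕ) → Matrix (Fin n) (Fin n) ℂ)
    (hRpsd : ∀ n, (R n).PosSemidef) (hRsq : ∀ n, (R n) ^ 2 = Tmat n) :
    ∀ z z₁ z₂ : ℂ, 0 < z.im → 0 < z₁.im → 0 < z₂.im →
      (Tendsto
        (fun n : ℕ => (1 / (n : ℂ)) * ∑ i : Fin n,
          (R n * (mUnder c m z₁ • Tmat n + 1)⁻¹ * R n) i i *
            (R n * (mUnder c m z₂ • Tmat n + 1)⁻¹ * R n) i i)
        atTop (nhds ((mUnder c m z₁ + 1)⁻¹ * (mUnder c m z₂ + 1)⁻¹))) ∧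
      (Tendsto
        (fun n : ℕ => (1 / (n : ℂ)) * ∑ i : Fin n,
          (R n * (mUnder c m z • Tmat n + 1)⁻¹ * R n) i i *
            (R n * ((((mUnder c m z • Tmat n + 1) : Matrix (Fin n) (Fin n) ℂ) ^ 2)⁻¹) * R n) i i)
        atTop (nhds (((mUnder c m z + 1) ^ 3)⁻¹))) := by
  intro z z₁ z₂ hz hz₁ hz₂
  obtain ⟨hu1, him⟩ := mUnder_keys c m hm hfix z hz
  obtain ⟨hu1₁, him₁⟩ := mUnder_keys c m hm hfix z₁ hz₁
  obtain ⟨hu1₂, him₂⟩ := mUnder_keys c m hm hfix z₂ hz₂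
  constructor
  · have hlim := (beta_lim _ hu1₁).mul (beta_lim _ hu1₂)
    apply hlim.congr'
    filter_upwards [eventually_ge_atTop 2] with n hn
    have hn0 : (n:ℂ) ≠ 0 := Nat.cast_ne_zero.mpr (by omega)
    have hsum : ∀ i : Fin n,
        (R n * (mUnder c m z₁ • Tmat n + 1)⁻¹ * R n) i i *
          (R n * (mUnder c m z₂ • Tmat n + 1)⁻¹ * R n) i i
        = (mUnder c m z₁ * ((n:ℂ)/((n:ℂ)-1)) + 1)⁻¹ *
            (mUnder c m z₂ * ((n:ℂ)/((n:ℂ)-1)) + 1)⁻¹ := by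
      intro i
      rw [(diag_eq c m R hRpsd hRsq z₁ him₁ n hn i).1,
        (diag_eq c m R hRpsd hRsq z₂ him₂ n hn i).1]
    rw [Finset.sum_congr rfl (fun i _ => hsum i)]
    rw [Finset.sum_const, Finset.card_univ, Fintype.card_fin, nsmul_eq_mul,
      one_div, inv_mul_cancel_left₀ hn0]
  · have hlim := (beta_lim _ hu1).mul (((beta_lim _ hu1).pow 2))
    have hval : (mUnder c m z + 1)⁻¹ * ((mUnder c m z + 1)⁻¹)^2
        = ((mUnder c m z + 1)^3)⁻¹ := by
      rw [inv_pow, ← mul_inv, ← pow_succ']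
    rw [← hval]
    apply hlim.congr'
    filter_upwards [eventually_ge_atTop 2] with n hn
    have hn0 : (n:ℂ) ≠ 0 := Nat.cast_ne_zero.mpr (by omega)
    have hsum : ∀ i : Fin n,
        (R n * (mUnder c m z • Tmat n + 1)⁻¹ * R n) i i *
          (R n * ((((mUnder c m z • Tmat n + 1) : Matrix (Fin n) (Fin n) ℂ) ^ 2)⁻¹) * R n) i i
        = (mUnder c m z * ((n:ℂ)/((n:ℂ)-1)) + 1)⁻¹ *
            ((mUnder c m z * ((n:ℂ)/((n:ℂ)-1)) + 1)⁻¹)^2 := by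
      intro i
      rw [(diag_eq c m R hRpsd hRsq z him n hn i).1,
        (diag_eq c m R hRpsd hRsq z him n hn i).2]
    rw [Finset.sum_congr rfl (fun i _ => hsum i)]
    rw [Finset.sum_const, Finset.card_univ, Fintype.card_fin, nsmul_eq_mul,
      one_div, inv_mul_cancel_left₀ hn0]
end
end
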